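/- Let S be a shifted simplicial complex on vertex set {1,...,n} with n ≥ 11, such that: (a) every 2-element subset σ with σ ≤_lex {3,n} is a face of S; (b) S has exactly 3n faces of size 2; (c) {5,6} is not a face of S. Then the faces of S of size 2 are exactly the 2-element subsets σ with σ ≤_lex {4,10}. -/
import Mathlib


/-- The dominance (componentwise) order on finite subsets of ℕ. -/
def lep (A B : Finset ℕ) : Prop :=
  List.Forall₂ (· ≤ ·) (A.sort (· ≤ ·)) (B.sort (· ≤ ·))

/-- The lexicographic order on finite subsets of ℕ. -/
def lexle (A B : Finset ℕ) : Prop :=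
  A = B ∨ ∃ x ∈ symmDiff A B, x ∈ A ∧ ∀ y ∈ symmDiff A B, x ≤ y


lemma pair_sort {a b : ℕ} (h : a < b) : ({a,b}:Finset ℕ).sort (· ≤ ·) = [a,b] := by
  rw [show ({a,b}:Finset ℕ) = insert a {b} from rfl, Finset.sort_insert, Finset.sort_singleton]
  · intro x hx; simp at hx; omega
  · simp; omega

lemma pair_eq_pair {a b c d : ℕ} (hab : a < b) (hcd : c < d) :
    ({a,b}:Finset ℕ) = {c,d} ↔ a = c ∧ b = d := by
  constructor
  · intro h
    have h1 : a ∈ ({c,d}:Finset ℕ) := h ▸ (by simp)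
    have h2 : b ∈ ({c,d}:Finset ℕ) := h ▸ (by simp)
    have h3 : c ∈ ({a,b}:Finset ℕ) := h ▸ (by simp)
    have h4 : d ∈ ({a,b}:Finset ℕ) := h ▸ (by simp)
    simp at h1 h2 h3 h4; omega
  · rintro ⟨rfl, rfl⟩; rfl

lemma lep_pair {a b c d : ℕ} (hab : a < b) (hcd : c < d) :
    lep {a,b} {c,d} ↔ a ≤ c ∧ b ≤ d := by
  rw [lep, pair_sort hab, pair_sort hcd]
  simp

lemma lexle_pair {a b c d : ℕ} (hab : a < b) (hcd : c < d) :
    lexle {a,b} {c,d} ↔ a < c ∨ (a = c ∧ b ≤ d) := by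
  constructor
  · rintro (h | ⟨x, hx, hxA, hmin⟩)
    · rw [pair_eq_pair hab hcd] at h; omega
    · rw [Finset.mem_symmDiff] at hx
      simp only [Finset.mem_insert, Finset.mem_singleton] at hx hxA
      by_cases hcA : c = a ∨ c = b
      · -- c ∈ A
        by_cases hdA : d = a ∨ d = b
        · -- both in A: A = {c,d} as sets, so x in symmdiff impossible unless...
          rcases hx with ⟨h1, h2⟩ | ⟨h1, h2⟩ <;> omega
        · have hd : d ∈ symmDiff ({a,b}:Finset ℕ) ({c,d}:Finset ℕ) := by
            rw [Finset.mem_symmDiff]; right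
            simp only [Finset.mem_insert, Finset.mem_singleton]
            exact ⟨by simp, by omega⟩
          have := hmin d hd
          rcases hx with ⟨h1, h2⟩ | ⟨h1, h2⟩ <;> omega
      · have hc : c ∈ symmDiff ({a,b}:Finset ℕ) ({c,d}:Finset ℕ) := by
          rw [Finset.mem_symmDiff]; right
          simp only [Finset.mem_insert, Finset.mem_singleton]
          exact ⟨by simp, by omega⟩
        have := hmin c hc
        rcases hx with ⟨h1, h2⟩ | ⟨h1, h2⟩ <;> omega
  · intro h
    rcases h with h | ⟨rfl, h⟩
    · right
      refine ⟨a, ?_, by simp, ?_⟩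
      · rw [Finset.mem_symmDiff]; left
        simp only [Finset.mem_insert, Finset.mem_singleton]
        exact ⟨by simp, by omega⟩
      · intro y hy
        rw [Finset.mem_symmDiff] at hy
        simp only [Finset.mem_insert, Finset.mem_singleton] at hy
        rcases hy with ⟨h1, _⟩ | ⟨h1, _⟩ <;> omega
    · by_cases hbd : b = d
      · left; rw [hbd]
      · right
        refine ⟨b, ?_, by simp, ?_⟩
        · rw [Finset.mem_symmDiff]; left
          simp only [Finset.mem_insert, Finset.mem_singleton]
          exact ⟨by simp, by omega⟩
        · intro y hy
          rw [Finset.mem_symmDiff] at hy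
          simp only [Finset.mem_insert, Finset.mem_singleton] at hy
          rcases hy with ⟨h1, h2⟩ | ⟨h1, h2⟩ <;> omega

lemma card_two {σ : Finset ℕ} (h : σ.card = 2) : ∃ a b, a < b ∧ σ = {a,b} := by
  rw [Finset.card_eq_two] at h
  obtain ⟨a, b, hne, rfl⟩ := h
  rcases lt_or_gt_of_ne hne with h | h
  · exact ⟨a, b, h, rfl⟩
  · exact ⟨b, a, h, by rw [Finset.pair_comm]⟩
/-- Let S be a shifted complex on {1,...,n}, n ≥ 11, containing all pairs
`≤_lex {3,n}`, having exactly `3n` faces of size 2, and with `{5,6} ∉ S`.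
Then the size-2 faces of S are exactly the pairs `≤_lex {4,10}`. -/
theorem stmt_14 (n : ℕ) (hn : 11 ≤ n) (S : Finset (Finset ℕ))
    (hvert : ∀ T ∈ S, T ⊆ Finset.Icc 1 n)
    (hshift : ∀ T ∈ S, ∀ σ ⊆ Finset.Icc 1 n, lep σ T → σ ∈ S)
    (ha : ∀ σ ⊆ Finset.Icc 1 n, σ.card = 2 → lexle σ {3, n} → σ ∈ S)
    (hb : (S.filter (fun σ => σ.card = 2)).card = 3 * n)
    (hc : ({5, 6} : Finset ℕ) ∉ S) :
    ∀ σ ⊆ Finset.Icc 1 n, σ.card = 2 → (σ ∈ S ↔ lexle σ {4, 10}) := by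
  have hbounds : ∀ a b : ℕ, a < b → ({a,b}:Finset ℕ) ∈ S → 1 ≤ a ∧ b ≤ n := by
    intro a b hab hmem
    have h1 := Finset.mem_Icc.mp (hvert _ hmem (Finset.mem_insert_self a {b}))
    have h2 := Finset.mem_Icc.mp (hvert _ hmem (Finset.mem_insert_of_mem (Finset.mem_singleton_self b)))
    omega
  have hmin4 : ∀ a b : ℕ, a < b → ({a,b}:Finset ℕ) ∈ S → a ≤ 4 := by
    intro a b hab hmem
    by_contra h
    push_neg at h
    refine hc (hshift _ hmem _ ?_ ?_)
    · intro x hx; simp only [Finset.mem_insert, Finset.mem_singleton] at hx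
      rcases hx with rfl | rfl <;> rw [Finset.mem_Icc] <;> omega
    · rw [lep_pair (by omega) hab]; omega
  have hBsub : ∀ a b : ℕ, 1 ≤ a → a ≤ 3 → a < b → b ≤ n → ({a,b}:Finset ℕ) ∈ S := by
    intro a b h1 h3 hab hbn
    apply ha
    · intro x hx; simp only [Finset.mem_insert, Finset.mem_singleton] at hx
      rcases hx with rfl | rfl <;> rw [Finset.mem_Icc] <;> omega
    · exact Finset.card_pair (by omega)
    · rw [lexle_pair hab (by omega : (3:ℕ) < n)]; omega
  set D := (Finset.Icc 5 n).filter (fun b => ({4,b}:Finset ℕ) ∈ S) with hD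
  set B1 := (Finset.Icc 2 n).image (fun b => ({1,b}:Finset ℕ)) with hB1
  set B2 := (Finset.Icc 3 n).image (fun b => ({2,b}:Finset ℕ)) with hB2
  set B3 := (Finset.Icc 4 n).image (fun b => ({3,b}:Finset ℕ)) with hB3
  set E := D.image (fun b => ({4,b}:Finset ℕ)) with hE
  have hFeq : S.filter (fun σ => σ.card = 2) = B1 ∪ B2 ∪ B3 ∪ E := by
    ext σ
    simp only [Finset.mem_union, Finset.mem_filter, hB1, hB2, hB3, hE, hD,
      Finset.mem_image, Finset.mem_Icc]
    constructor
    · rintro ⟨hmemS, hcard⟩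
      obtain ⟨a, b, hab, rfl⟩ := card_two hcard
      obtain ⟨ha1, hbn⟩ := hbounds a b hab hmemS
      have ha4 := hmin4 a b hab hmemS
      interval_cases a
      · exact Or.inl (Or.inl (Or.inl ⟨b, ⟨by omega, hbn⟩, rfl⟩))
      · exact Or.inl (Or.inl (Or.inr ⟨b, ⟨by omega, hbn⟩, rfl⟩))
      · exact Or.inl (Or.inr ⟨b, ⟨by omega, hbn⟩, rfl⟩)
      · exact Or.inr ⟨b, ⟨⟨by omega, hbn⟩, hmemS⟩, rfl⟩
    · rintro (((⟨b, ⟨h1, h2⟩, rfl⟩ | ⟨b, ⟨h1, h2⟩, rfl⟩) | ⟨b, ⟨h1, h2⟩, rfl⟩) |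
        ⟨b, ⟨⟨h1, h2⟩, hmem⟩, rfl⟩)
      · exact ⟨hBsub 1 b (by omega) (by omega) (by omega) h2, Finset.card_pair (by omega)⟩
      · exact ⟨hBsub 2 b (by omega) (by omega) (by omega) h2, Finset.card_pair (by omega)⟩
      · exact ⟨hBsub 3 b (by omega) (by omega) (by omega) h2, Finset.card_pair (by omega)⟩
      · exact ⟨hmem, Finset.card_pair (by omega)⟩
  have hinj : ∀ c : ℕ, ∀ s : Finset ℕ, (∀ x ∈ s, c < x) →
      (s.image (fun b => ({c,b}:Finset ℕ))).card = s.card := by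
    intro c s hs
    apply Finset.card_image_of_injOn
    intro x hx y hy hxy
    exact ((pair_eq_pair (hs x hx) (hs y hy)).mp hxy).2
  have hd12 : Disjoint (B1 : Finset (Finset ℕ)) B2 := by
    rw [Finset.disjoint_left]
    rintro σ h1 h2
    simp only [hB1, hB2, Finset.mem_image, Finset.mem_Icc] at h1 h2
    obtain ⟨x, hx, rfl⟩ := h1
    obtain ⟨y, hy, hxy⟩ := h2
    have := (pair_eq_pair (by omega : 2 < y) (by omega : 1 < x)).mp hxy
    omega
  have hd123 : Disjoint (B1 ∪ B2 : Finset (Finset ℕ)) B3 := by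
    rw [Finset.disjoint_left]
    rintro σ h1 h2
    simp only [hB1, hB2, hB3, Finset.mem_union, Finset.mem_image, Finset.mem_Icc] at h1 h2
    obtain ⟨y, hy, hxy⟩ := h2
    rcases h1 with ⟨x, hx, rfl⟩ | ⟨x, hx, rfl⟩
    · have := (pair_eq_pair (by omega : 3 < y) (by omega : 1 < x)).mp hxy; omega
    · have := (pair_eq_pair (by omega : 3 < y) (by omega : 2 < x)).mp hxy; omega
  have hd123E : Disjoint (B1 ∪ B2 ∪ B3 : Finset (Finset ℕ)) E := by
    rw [Finset.disjoint_left]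
    rintro σ h1 h2
    simp only [hB1, hB2, hB3, hE, hD, Finset.mem_union, Finset.mem_image,
      Finset.mem_filter, Finset.mem_Icc] at h1 h2
    obtain ⟨y, ⟨⟨hy5, _⟩, _⟩, hxy⟩ := h2
    rcases h1 with (⟨x, hx, rfl⟩ | ⟨x, hx, rfl⟩) | ⟨x, hx, rfl⟩
    · have := (pair_eq_pair (by omega : 4 < y) (by omega : 1 < x)).mp hxy; omega
    · have := (pair_eq_pair (by omega : 4 < y) (by omega : 2 < x)).mp hxy; omega
    · have := (pair_eq_pair (by omega : 4 < y) (by omega : 3 < x)).mp hxy; omega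
  have hDcard : D.card = 6 := by
    have hcB1 : B1.card = n - 1 := by
      rw [hB1, hinj 1 _ (fun x hx => by rw [Finset.mem_Icc] at hx; omega), Nat.card_Icc]
      omega
    have hcB2 : B2.card = n - 2 := by
      rw [hB2, hinj 2 _ (fun x hx => by rw [Finset.mem_Icc] at hx; omega), Nat.card_Icc]
      omega
    have hcB3 : B3.card = n - 3 := by
      rw [hB3, hinj 3 _ (fun x hx => by rw [Finset.mem_Icc] at hx; omega), Nat.card_Icc]
      omega
    have hcE : E.card = D.card := by
      rw [hE]
      apply hinj 4
      intro x hx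
      rw [hD, Finset.mem_filter, Finset.mem_Icc] at hx; omega
    rw [hFeq, Finset.card_union_of_disjoint hd123E, Finset.card_union_of_disjoint hd123,
      Finset.card_union_of_disjoint hd12, hcB1, hcB2, hcB3, hcE] at hb
    omega
  have hDclosed : ∀ b ∈ D, ∀ b', 5 ≤ b' → b' ≤ b → b' ∈ D := by
    intro b hbmem b' h5 hle
    rw [hD, Finset.mem_filter, Finset.mem_Icc] at hbmem ⊢
    refine ⟨⟨h5, le_trans hle hbmem.1.2⟩, ?_⟩
    apply hshift _ hbmem.2
    · intro x hx; simp only [Finset.mem_insert, Finset.mem_singleton] at hx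
      rcases hx with rfl | rfl <;> rw [Finset.mem_Icc] <;> omega
    · rw [lep_pair (by omega) (by omega)]; omega
  have hDeq : D = Finset.Icc 5 10 := by
    apply Finset.eq_of_subset_of_card_le
    · intro b hbmem
      have h5 : 5 ≤ b := by
        have := (Finset.mem_filter.mp hbmem).1
        rw [Finset.mem_Icc] at this; omega
      rw [Finset.mem_Icc]
      refine ⟨h5, ?_⟩
      by_contra h
      push_neg at h
      have hsub : Finset.Icc 5 b ⊆ D := fun x hx => by
        rw [Finset.mem_Icc] at hx
        exact hDclosed b hbmem x hx.1 hx.2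
      have := Finset.card_le_card hsub
      rw [Nat.card_Icc, hDcard] at this
      omega
    · rw [hDcard, Nat.card_Icc]
  intro σ hσ hcard
  obtain ⟨a, b, hab, rfl⟩ := card_two hcard
  have ha1 : 1 ≤ a := by
    have := Finset.mem_Icc.mp (hσ (Finset.mem_insert_self a {b})); omega
  have hbn : b ≤ n := by
    have := Finset.mem_Icc.mp (hσ (Finset.mem_insert_of_mem (Finset.mem_singleton_self b))); omega
  rw [lexle_pair hab (by norm_num : (4:ℕ) < 10)]
  constructor
  · intro hmem
    have ha4 := hmin4 a b hab hmem
    by_cases h : a ≤ 3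
    · left; omega
    · have ha4' : a = 4 := by omega
      subst ha4'
      have hbD : b ∈ D := by
        rw [hD, Finset.mem_filter, Finset.mem_Icc]
        exact ⟨⟨by omega, hbn⟩, hmem⟩
      rw [hDeq, Finset.mem_Icc] at hbD
      right; exact ⟨rfl, hbD.2⟩
  · rintro (h | ⟨rfl, h⟩)
    · exact hBsub a b ha1 (by omega) hab hbn
    · have hbD : b ∈ D := by rw [hDeq, Finset.mem_Icc]; omega
      exact (Finset.mem_filter.mp hbD).2
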